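/- arXiv:1006.0524 — 4 statements merged into one kernel-verified Lean document; each statement's English description precedes it below -/
import Mathlib

section
/- Let f be (the holomorphic extension of) a complete Bernstein function and let ε ∈ (0, π). Then for every complex z with |Arg z| ≤ π − ε, one has |f(z)| ≤ (sin(ε/2))⁻¹ f(|z|). -/
open MeasureTheory Set

/-- If `f` is (the holomorphic extension of) a complete Bernstein function and
`ε ∈ (0, π)`, then `|f(z)| ≤ (sin(ε/2))⁻¹ f(|z|)` for all `z` with `|Arg z| ≤ π - ε`. -/
theorem cbf_sector_bound (f : ℂ → ℂ) (c₁ c₂ : ℝ) (hc₁ : 0 ≤ c₁) (hc₂ : 0 ≤ c₂)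
    (m₀ : Measure ℝ) (hsupp : ∀ᵐ s ∂m₀, 0 < s)
    (hint : ∫⁻ s, ENNReal.ofReal (min s⁻¹ (s ^ 2)⁻¹) ∂m₀ < ⊤)
    (hrep : ∀ z : ℂ, (z.im ≠ 0 ∨ 0 < z.re) →
      f z = (c₁ : ℂ) + (c₂ : ℂ) * z + (1 / (Real.pi : ℂ)) * ∫ s, (z / (z + (s : ℂ))) * (s : ℂ)⁻¹ ∂m₀)
    (ε : ℝ) (hε : ε ∈ Set.Ioo 0 Real.pi) :
    ∀ z : ℂ, z ≠ 0 → |Complex.arg z| ≤ Real.pi - ε →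
      ‖f z‖ ≤ (Real.sin (ε / 2))⁻¹ * ‖f ((‖z‖ : ℝ) : ℂ)‖ := by
  intro z hz harg
  set σ : ℝ := Real.sin (ε / 2) with hσdef
  have hσ : 0 < σ := Real.sin_pos_of_pos_of_lt_pi (by linarith [hε.1]) (by linarith [hε.2, Real.pi_pos])
  have hσ1 : σ ≤ 1 := Real.sin_le_one _
  set r : ℝ := ‖z‖ with hrdef
  have hr : 0 < r := norm_pos_iff.mpr hz
  -- cos ε = 1 - 2 σ²
  have hcosε : Real.cos ε = 1 - 2 * σ ^ 2 := by
    have h2 : Real.cos (2 * (ε / 2)) = 2 * Real.cos (ε / 2) ^ 2 - 1 := Real.cos_two_mul _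
    rw [show 2 * (ε / 2) = ε by ring] at h2
    have h3 := Real.sin_sq_add_cos_sq (ε / 2)
    rw [hσdef]
    linarith
  -- z.re ≥ -r * cos ε
  have hre : -(r * Real.cos ε) ≤ z.re := by
    have hcosarg : Real.cos (Complex.arg z) = z.re / r := Complex.cos_arg hz
    have h1 : Real.cos (Real.pi - ε) ≤ Real.cos |Complex.arg z| := by
      apply Real.cos_le_cos_of_nonneg_of_le_pi (abs_nonneg _) (by linarith [hε.1]) harg
    rw [Real.cos_abs, Real.cos_pi_sub, hcosarg] at h1
    have h1' := mul_le_mul_of_nonneg_right h1 hr.le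
    rw [div_mul_cancel₀ _ hr.ne'] at h1'
    linarith
  -- key: |z + s| ≥ σ (r + s) for s ≥ 0
  have key : ∀ s : ℝ, 0 < s → σ * (r + s) ≤ ‖z + (s : ℂ)‖ := by
    intro s hs
    have hsq : (σ * (r + s)) ^ 2 ≤ Complex.normSq (z + (s : ℂ)) := by
      have hns : Complex.normSq (z + (s : ℂ)) = (z.re + s) ^ 2 + z.im ^ 2 := by
        simp [Complex.normSq_apply]; ring
      have habs2 : z.re ^ 2 + z.im ^ 2 = r ^ 2 := by
        rw [hrdef, Complex.sq_norm, Complex.normSq_apply]; ring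
      rw [hns]
      have h4 : 0 ≤ (1 - σ ^ 2) * (r - s) ^ 2 :=
        mul_nonneg (by nlinarith [hσ1, hσ.le]) (sq_nonneg _)
      have h5 : s * (-(r * Real.cos ε)) ≤ s * z.re := mul_le_mul_of_nonneg_left hre hs.le
      rw [hcosε] at h5
      nlinarith [h4, h5, habs2]
    calc σ * (r + s) = Real.sqrt ((σ * (r + s)) ^ 2) := by
          rw [Real.sqrt_sq (by positivity)]
      _ ≤ Real.sqrt (Complex.normSq (z + (s : ℂ))) := Real.sqrt_le_sqrt hsq
      _ = ‖z + (s : ℂ)‖ := (Complex.norm_def _).symm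
  -- real integrand
  set H : ℝ → ℝ := fun s => r / (r + s) * s⁻¹ with hHdef
  have hHmeas : Measurable H := by
    exact (measurable_const.div (measurable_const.add measurable_id)).mul measurable_inv
  have hHnonneg : ∀ s : ℝ, 0 < s → 0 ≤ H s := by
    intro s hs; exact mul_nonneg (div_nonneg hr.le (by linarith)) (inv_nonneg.mpr hs.le)
  -- bound: H s ≤ max 1 r * min s⁻¹ (s²)⁻¹ for s > 0
  have hHbound : ∀ s : ℝ, 0 < s → H s ≤ max 1 r * min s⁻¹ ((s ^ 2)⁻¹) := by
    intro s hs
    rcases le_total (s⁻¹) ((s ^ 2)⁻¹) with h | h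
    · rw [min_eq_left h]
      have h1 : r / (r + s) ≤ 1 := by
        rw [div_le_one (by linarith)]; linarith
      calc H s ≤ 1 * s⁻¹ := mul_le_mul_of_nonneg_right h1 (inv_nonneg.mpr hs.le)
        _ ≤ max 1 r * s⁻¹ := mul_le_mul_of_nonneg_right (le_max_left _ _) (inv_nonneg.mpr hs.le)
    · rw [min_eq_right h]
      have h1 : r / (r + s) ≤ r / s := by
        apply div_le_div_of_nonneg_left hr.le hs; linarith
      calc H s ≤ r / s * s⁻¹ := mul_le_mul_of_nonneg_right h1 (inv_nonneg.mpr hs.le)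
        _ = r * (s ^ 2)⁻¹ := by rw [sq, mul_inv, div_eq_mul_inv, mul_assoc]
        _ ≤ max 1 r * (s ^ 2)⁻¹ := mul_le_mul_of_nonneg_right (le_max_right _ _) (by positivity)
  -- integrability of the benchmark
  have hMint : Integrable (fun s : ℝ => min s⁻¹ ((s ^ 2)⁻¹)) m₀ := by
    constructor
    · exact (measurable_inv.min ((measurable_id.pow_const 2).inv)).aestronglyMeasurable
    · rw [hasFiniteIntegral_iff_ofReal]
      · exact hint
      · filter_upwards [hsupp] with s hs
        exact le_min (inv_nonneg.mpr hs.le) (by positivity)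
  have hHint : Integrable H m₀ := by
    apply Integrable.mono' (hMint.const_mul (max 1 r)) hHmeas.aestronglyMeasurable
    filter_upwards [hsupp] with s hs
    rw [Real.norm_eq_abs, abs_of_nonneg (hHnonneg s hs)]
    exact hHbound s hs
  -- complex integrand
  set G : ℝ → ℂ := fun s => z / (z + (s : ℂ)) * ((s : ℂ))⁻¹ with hGdef
  have hGmeas : Measurable G := by
    exact (measurable_const.div (measurable_const.add Complex.measurable_ofReal)).mul
      Complex.measurable_ofReal.inv
  have hGbound : ∀ᵐ s ∂m₀, ‖G s‖ ≤ σ⁻¹ * H s := by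
    filter_upwards [hsupp] with s hs
    have hkey := key s hs
    have hpos : 0 < σ * (r + s) := by positivity
    have habsne : (0 : ℝ) < ‖z + (s : ℂ)‖ := lt_of_lt_of_le hpos hkey
    have h1 : ‖G s‖ = r / ‖z + (s : ℂ)‖ * s⁻¹ := by
      simp [hGdef, map_mul, map_div₀, Complex.norm_real, abs_of_nonneg hs.le, hrdef]
    rw [h1]
    have h2 : r / ‖z + (s : ℂ)‖ ≤ r / (σ * (r + s)) :=
      div_le_div_of_nonneg_left hr.le hpos hkey
    have h3 : r / (σ * (r + s)) = σ⁻¹ * (r / (r + s)) := by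
      field_simp
    calc r / ‖z + (s : ℂ)‖ * s⁻¹ ≤ r / (σ * (r + s)) * s⁻¹ :=
          mul_le_mul_of_nonneg_right h2 (inv_nonneg.mpr hs.le)
      _ = σ⁻¹ * H s := by rw [h3, hHdef]; ring
  have hGint : Integrable G m₀ := by
    apply Integrable.mono' (hHint.const_mul σ⁻¹) hGmeas.aestronglyMeasurable hGbound
  -- norm of the complex integral
  have hnormint : ‖∫ s, G s ∂m₀‖ ≤ σ⁻¹ * ∫ s, H s ∂m₀ := by
    calc ‖∫ s, G s ∂m₀‖ ≤ ∫ s, σ⁻¹ * H s ∂m₀ :=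
          norm_integral_le_of_norm_le (hHint.const_mul σ⁻¹) hGbound
      _ = σ⁻¹ * ∫ s, H s ∂m₀ := integral_const_mul _ _
  set I : ℝ := ∫ s, H s ∂m₀ with hIdef
  have hInn : 0 ≤ I := by
    apply integral_nonneg_of_ae
    filter_upwards [hsupp] with s hs using hHnonneg s hs
  -- value at r
  have hfr : f ((r : ℝ) : ℂ) = ((c₁ + c₂ * r + Real.pi⁻¹ * I : ℝ) : ℂ) := by
    rw [hrep ((r : ℝ) : ℂ) (Or.inr (by simpa using hr))]
    have hcongr : ∫ s, ((r : ℂ) / ((r : ℂ) + (s : ℂ)) * ((s : ℂ))⁻¹) ∂m₀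
        = ∫ s, ((H s : ℝ) : ℂ) ∂m₀ := by
      apply integral_congr_ae
      filter_upwards [hsupp] with s hs
      rw [hHdef]
      push_cast
      ring
    have hofReal : ∫ s, ((H s : ℝ) : ℂ) ∂m₀ = ((I : ℝ) : ℂ) := by
      rw [hIdef]; exact integral_ofReal
    rw [hcongr, hofReal]
    push_cast
    ring
  have hπ : (0 : ℝ) < Real.pi := Real.pi_pos
  have habsfr : ‖f ((r : ℝ) : ℂ)‖ = c₁ + c₂ * r + Real.pi⁻¹ * I := by
    rw [hfr, Complex.norm_real, Real.norm_eq_abs, abs_of_nonneg]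
    positivity
  -- main estimate
  have hfz : f z = (c₁ : ℂ) + (c₂ : ℂ) * z + (1 / (Real.pi : ℂ)) * ∫ s, G s ∂m₀ := by
    apply hrep z
    by_contra hcon
    push_neg at hcon
    obtain ⟨him, hre'⟩ := hcon
    have hre2 : z.re < 0 := by
      rcases lt_or_eq_of_le hre' with h | h
      · exact h
      · exfalso; exact hz (Complex.ext_iff.mpr ⟨by simpa using h, by simpa using him⟩)
    have : Complex.arg z = Real.pi := Complex.arg_eq_pi_iff.mpr ⟨hre2, him⟩
    rw [this] at harg
    rw [abs_of_pos hπ] at harg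
    linarith [hε.1]
  have hineq : ‖f z‖ ≤ c₁ + c₂ * r + Real.pi⁻¹ * (σ⁻¹ * I) := by
    rw [hfz]
    calc ‖(c₁ : ℂ) + (c₂ : ℂ) * z + (1 / (Real.pi : ℂ)) * ∫ s, G s ∂m₀‖
        ≤ ‖(c₁ : ℂ) + (c₂ : ℂ) * z‖
          + ‖(1 / (Real.pi : ℂ)) * ∫ s, G s ∂m₀‖ := norm_add_le _ _
      _ ≤ ‖(c₁ : ℂ)‖ + ‖(c₂ : ℂ) * z‖
          + ‖(1 / (Real.pi : ℂ)) * ∫ s, G s ∂m₀‖ := by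
          linarith [norm_add_le (c₁ : ℂ) ((c₂ : ℂ) * z)]
      _ = c₁ + c₂ * r + Real.pi⁻¹ * ‖∫ s, G s ∂m₀‖ := by
          rw [norm_mul, norm_mul, Complex.norm_real, Complex.norm_real, Real.norm_eq_abs,
            Real.norm_eq_abs, abs_of_nonneg hc₁, abs_of_nonneg hc₂]
          congr 1
          rw [norm_div, norm_one, Complex.norm_real, Real.norm_eq_abs, abs_of_pos hπ, one_div]
      _ ≤ c₁ + c₂ * r + Real.pi⁻¹ * (σ⁻¹ * I) := by
          have h := hnormint
          have : Real.pi⁻¹ * ‖∫ s, G s ∂m₀‖ ≤ Real.pi⁻¹ * (σ⁻¹ * I) :=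
            mul_le_mul_of_nonneg_left h (inv_nonneg.mpr hπ.le)
          linarith
  rw [habsfr]
  have hσinv : 1 ≤ σ⁻¹ := (one_le_inv₀ hσ).mpr hσ1
  have hπI : 0 ≤ Real.pi⁻¹ * I := mul_nonneg (inv_nonneg.mpr hπ.le) hInn
  have hcr : 0 ≤ c₂ * r := mul_nonneg hc₂ hr.le
  nlinarith [hineq, mul_le_mul_of_nonneg_right hσinv (add_nonneg hc₁ hcr)]
end

section
/- Let f be the holomorphic extension of a complete Bernstein function and a > 0. Define f*(z) = (1/(2ia))·(f(ia)/(z − ia) − f(−ia)/(z + ia)). Then g(z) = f*(z) − f(z)/(z² + a²) is a Stieltjes function; explicitly, g(z) = (1/π)∫₀^∞ (1/(z+s)) · m₀(ds)/(a² + s²), where m₀ is the representing measure of f. -/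
open MeasureTheory Set

lemma aux_add_ne (z : ℂ) (hz : z.im ≠ 0 ∨ 0 < z.re) (s : ℝ) (hs : 0 ≤ s) :
    z + (s : ℂ) ≠ 0 := by
  intro h
  have him : z.im = 0 := by have := congrArg Complex.im h; simpa using this
  have hre : z.re + s = 0 := by have := congrArg Complex.re h; simpa using this
  rcases hz with h1 | h1
  · exact h1 him
  · linarith

lemma aux_lb (z : ℂ) (hz : z.im ≠ 0 ∨ 0 < z.re) :
    ∃ ε > 0, ∀ s : ℝ, 0 ≤ s → ε ≤ ‖z + s‖ := by
  rcases hz with h1 | h1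
  · refine ⟨|z.im|, abs_pos.mpr h1, fun s hs => ?_⟩
    have : (z + (s:ℂ)).im = z.im := by simp
    calc |z.im| = |(z + (s:ℂ)).im| := by rw [this]
    _ ≤ ‖z + s‖ := Complex.abs_im_le_norm _
  · refine ⟨z.re, h1, fun s hs => ?_⟩
    have h2 : (z + (s:ℂ)).re = z.re + s := by simp
    calc z.re ≤ (z + (s:ℂ)).re := by rw [h2]; linarith
    _ ≤ ‖z + s‖ := Complex.re_le_norm _

lemma integrable_min (m₀ : Measure ℝ) (hsupp : ∀ᵐ s ∂m₀, 0 < s)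
    (hint : ∫⁻ s, ENNReal.ofReal (min s⁻¹ (s ^ 2)⁻¹) ∂m₀ < ⊤) :
    Integrable (fun s : ℝ => min s⁻¹ (s ^ 2)⁻¹) m₀ := by
  refine ⟨(measurable_inv.min ((measurable_id.pow_const 2).inv)).aestronglyMeasurable, ?_⟩
  rw [HasFiniteIntegral]
  have : ∀ᵐ s ∂m₀, ‖min s⁻¹ (s ^ 2)⁻¹‖ₑ = ENNReal.ofReal (min s⁻¹ (s ^ 2)⁻¹) := by
    filter_upwards [hsupp] with s hs
    exact Real.enorm_eq_ofReal (le_min (by positivity) (by positivity))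
  rw [lintegral_congr_ae this]
  exact hint

lemma integrable_kernel (m₀ : Measure ℝ) (hsupp : ∀ᵐ s ∂m₀, 0 < s)
    (hint : ∫⁻ s, ENNReal.ofReal (min s⁻¹ (s ^ 2)⁻¹) ∂m₀ < ⊤)
    (z : ℂ) (hz : z.im ≠ 0 ∨ 0 < z.re) :
    Integrable (fun s : ℝ => (z / (z + (s:ℂ))) * (s:ℂ)⁻¹) m₀ := by
  obtain ⟨ε, hε, hlb⟩ := aux_lb z hz
  set M : ℝ := max 1 (2 * ‖z‖) with hM
  set K : ℝ := max (‖z‖ * M / ε) (2 * ‖z‖) with hK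
  have hM1 : 1 ≤ M := le_max_left _ _
  have hK0 : 0 ≤ K := le_trans (by positivity) (le_max_right _ _)
  refine Integrable.mono (((integrable_min m₀ hsupp hint).const_mul K)) ?_ ?_
  · apply Measurable.aestronglyMeasurable
    fun_prop
  · filter_upwards [hsupp] with s hs
    have hzs : (0:ℝ) < ‖z + s‖ := lt_of_lt_of_le hε (hlb s hs.le)
    have hmin : 0 ≤ min s⁻¹ (s ^ 2)⁻¹ := le_min (by positivity) (by positivity)
    have hnorm : ‖(z / (z + (s:ℂ))) * (s:ℂ)⁻¹‖ = ‖z‖ / ‖z + s‖ * s⁻¹ := by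
      simp [norm_mul, norm_div, norm_inv, Complex.norm_of_nonneg hs.le, hs.le]
    rw [hnorm]
    have hKnorm : ‖K * min s⁻¹ (s ^ 2)⁻¹‖ = K * min s⁻¹ (s ^ 2)⁻¹ :=
      abs_of_nonneg (mul_nonneg hK0 hmin)
    rw [hKnorm]
    rcases le_total s M with hsM | hsM
    · have h1 : ‖z‖ / ‖z + s‖ ≤ ‖z‖ / ε :=
        div_le_div_of_nonneg_left (norm_nonneg z) hε (hlb s hs.le)
      have h2 : s⁻¹ ≤ M * min s⁻¹ (s ^ 2)⁻¹ := by
        rcases le_total s 1 with hs1 | hs1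
        · have : min s⁻¹ (s ^ 2)⁻¹ = s⁻¹ := min_eq_left (by
            rw [inv_le_inv₀ (by positivity) (by positivity)]; nlinarith)
          rw [this]; nlinarith [inv_pos.mpr hs]
        · have : min s⁻¹ (s ^ 2)⁻¹ = (s ^ 2)⁻¹ := min_eq_right (by
            rw [inv_le_inv₀ (by positivity) (by positivity)]; nlinarith)
          rw [this]
          rw [show (s^2)⁻¹ = s⁻¹ * s⁻¹ by rw [sq]; rw [mul_inv]]
          have hsi : s⁻¹ ≤ 1 := by rw [inv_le_one_iff₀]; right; exact hs1
          have : M * (s⁻¹ * s⁻¹) = (M * s⁻¹) * s⁻¹ := by ring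
          rw [this]
          have h4 : (1:ℝ) ≤ M * s⁻¹ := by
            rw [← div_eq_mul_inv, le_div_iff₀ hs]; linarith
          nlinarith [inv_pos.mpr hs]
      calc ‖z‖ / ‖z + s‖ * s⁻¹
          ≤ ‖z‖ / ε * s⁻¹ := by
            exact mul_le_mul_of_nonneg_right h1 (by positivity)
        _ ≤ ‖z‖ / ε * (M * min s⁻¹ (s ^ 2)⁻¹) :=
            mul_le_mul_of_nonneg_left h2 (by positivity)
        _ = ‖z‖ * M / ε * min s⁻¹ (s ^ 2)⁻¹ := by ring
        _ ≤ K * min s⁻¹ (s ^ 2)⁻¹ := mul_le_mul_of_nonneg_right (le_max_left _ _) hmin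
    · have hs1 : 1 ≤ s := le_trans hM1 hsM
      have hs2z : 2 * ‖z‖ ≤ s := le_trans (le_max_right _ _) hsM
      have habs : s / 2 ≤ ‖z + s‖ := by
        have h1 : ‖(s:ℂ)‖ ≤ ‖z + s‖ + ‖z‖ := by
          have h2 := norm_add_le (z + s) (-z)
          simpa using h2
        rw [Complex.norm_of_nonneg hs.le] at h1
        linarith
      have hq : ‖z‖ / ‖z + s‖ ≤ ‖z‖ / (s / 2) :=
        div_le_div_of_nonneg_left (norm_nonneg z) (by positivity) habs
      have hminr : min s⁻¹ (s ^ 2)⁻¹ = (s ^ 2)⁻¹ := min_eq_right (by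
        rw [inv_le_inv₀ (by positivity) (by positivity)]; nlinarith)
      rw [hminr]
      calc ‖z‖ / ‖z + s‖ * s⁻¹
          ≤ ‖z‖ / (s / 2) * s⁻¹ :=
            mul_le_mul_of_nonneg_right hq (by positivity)
        _ = 2 * ‖z‖ * (s ^ 2)⁻¹ := by field_simp
        _ ≤ K * (s ^ 2)⁻¹ :=
            mul_le_mul_of_nonneg_right (le_max_right _ _) (by positivity)

lemma pf_gen (z s w : ℂ) (hw : w ≠ 0) (hs : s ≠ 0) (hzs : z + s ≠ 0)
    (h1 : z - w ≠ 0) (h2 : z + w ≠ 0) (hw1 : w + s ≠ 0) (hw2 : -w + s ≠ 0) :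
    (1 / (2 * w * (z - w))) * ((w / (w + s)) * s⁻¹)
      - (1 / (2 * w * (z + w))) * ((-w / (-w + s)) * s⁻¹)
      - (1 / ((z - w) * (z + w))) * ((z / (z + s)) * s⁻¹)
    = (1 / (z + s)) * ((-w + s) * (w + s))⁻¹ := by
  have e1 : (1 / (2 * w * (z - w))) * ((w / (w + s)) * s⁻¹)
      = w / (2 * w * (z - w) * ((w + s) * s)) := by
    simp only [div_eq_mul_inv, mul_inv, one_mul]; ring
  have e2 : (1 / (2 * w * (z + w))) * ((-w / (-w + s)) * s⁻¹)
      = -w / (2 * w * (z + w) * ((-w + s) * s)) := by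
    simp only [div_eq_mul_inv, mul_inv, one_mul]; ring
  have e3 : (1 / ((z - w) * (z + w))) * ((z / (z + s)) * s⁻¹)
      = z / ((z - w) * (z + w) * ((z + s) * s)) := by
    simp only [div_eq_mul_inv, mul_inv, one_mul]; ring
  have e4 : (1 / (z + s)) * ((-w + s) * (w + s))⁻¹
      = 1 / ((z + s) * ((-w + s) * (w + s))) := by
    simp only [div_eq_mul_inv, mul_inv, one_mul]
  have d1 : 2 * w * (z - w) * ((w + s) * s) ≠ 0 :=
    mul_ne_zero (mul_ne_zero (mul_ne_zero two_ne_zero hw) h1) (mul_ne_zero hw1 hs)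
  have d2 : 2 * w * (z + w) * ((-w + s) * s) ≠ 0 :=
    mul_ne_zero (mul_ne_zero (mul_ne_zero two_ne_zero hw) h2) (mul_ne_zero hw2 hs)
  have d3 : (z - w) * (z + w) * ((z + s) * s) ≠ 0 :=
    mul_ne_zero (mul_ne_zero h1 h2) (mul_ne_zero hzs hs)
  have d4 : (z + s) * ((-w + s) * (w + s)) ≠ 0 :=
    mul_ne_zero hzs (mul_ne_zero hw2 hw1)
  rw [e1, e2, e3, e4, div_sub_div _ _ d1 d2, div_sub_div _ _ (mul_ne_zero d1 d2) d3,
    div_eq_div_iff (mul_ne_zero (mul_ne_zero d1 d2) d3) d4]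
  ring

lemma pf_identity (z : ℂ) (a s : ℝ) (ha : 0 < a) (hs : 0 < s) (hzs : z + (s:ℂ) ≠ 0)
    (h1 : z - Complex.I * a ≠ 0) (h2 : z + Complex.I * a ≠ 0) :
    (1 / (2 * Complex.I * a * (z - Complex.I * a))) *
        ((Complex.I * a / (Complex.I * a + s)) * (s:ℂ)⁻¹)
      - (1 / (2 * Complex.I * a * (z + Complex.I * a))) *
        ((-(Complex.I * a) / (-(Complex.I * a) + s)) * (s:ℂ)⁻¹)
      - (1 / ((z - Complex.I * a) * (z + Complex.I * a))) * ((z / (z + s)) * (s:ℂ)⁻¹)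
    = (1 / (z + s)) * ((a ^ 2 + s ^ 2 : ℝ) : ℂ)⁻¹ := by
  have ha0 : (a:ℂ) ≠ 0 := by exact_mod_cast ha.ne'
  have hs0 : (s:ℂ) ≠ 0 := by exact_mod_cast hs.ne'
  have hIa : Complex.I * a ≠ 0 := mul_ne_zero Complex.I_ne_zero ha0
  have hw1 : Complex.I * a + s ≠ 0 := by
    intro h
    have := congrArg Complex.im h
    simp [Complex.mul_im] at this
    exact ha.ne' this
  have hw2 : -(Complex.I * a) + s ≠ 0 := by
    intro h
    have := congrArg Complex.im h
    simp [Complex.mul_im] at this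
    exact ha.ne' this
  have hsum : ((a ^ 2 + s ^ 2 : ℝ) : ℂ) = (-(Complex.I * a) + s) * (Complex.I * a + s) := by
    push_cast
    ring_nf
    rw [Complex.I_sq]
    ring
  rw [hsum]
  have := pf_gen z s (Complex.I * a) hIa hs0 hzs h1 h2 hw1 hw2
  rw [show (2 : ℂ) * (Complex.I * a) = 2 * Complex.I * a from (mul_assoc _ _ _).symm] at this
  exact this

lemma final_alg (w z p c₁ c₂ X Y W : ℂ) (hw : w ≠ 0) (h1 : z - w ≠ 0) (h2 : z + w ≠ 0) :
    (1/(2*w)) * ((c₁ + c₂*w + p*X)/(z-w) - (c₁ + c₂*(-w) + p*Y)/(z+w))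
      - (c₁ + c₂*z + p*W)/((z-w)*(z+w))
    = p * ((1/(2*w*(z-w)))*X - (1/(2*w*(z+w)))*Y - (1/((z-w)*(z+w)))*W) := by
  have h2w : (2:ℂ)*w ≠ 0 := mul_ne_zero two_ne_zero hw
  field_simp
  ring

/-- Let `f` be the holomorphic extension of a complete Bernstein function with
representing measure `m₀`, and `a > 0`. With
`f*(z) = (1/(2ia)) (f(ia)/(z - ia) - f(-ia)/(z + ia))`, the function
`g(z) = f*(z) - f(z)/(z² + a²)` is a Stieltjes function; explicitly
`g(z) = (1/π) ∫₀^∞ (1/(z+s)) m₀(ds)/(a² + s²)`. -/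
theorem cbf_fstar_stieltjes (f : ℂ → ℂ) (c₁ c₂ : ℝ) (hc₁ : 0 ≤ c₁) (hc₂ : 0 ≤ c₂)
    (m₀ : Measure ℝ) (hsupp : ∀ᵐ s ∂m₀, 0 < s)
    (hint : ∫⁻ s, ENNReal.ofReal (min s⁻¹ (s ^ 2)⁻¹) ∂m₀ < ⊤)
    (hrep : ∀ z : ℂ, (z.im ≠ 0 ∨ 0 < z.re) →
      f z = (c₁ : ℂ) + (c₂ : ℂ) * z + (1 / (Real.pi : ℂ)) * ∫ s, (z / (z + (s : ℂ))) * (s : ℂ)⁻¹ ∂m₀)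
    (a : ℝ) (ha : 0 < a) :
    ∀ z : ℂ, (z.im ≠ 0 ∨ 0 < z.re) →
      z ≠ Complex.I * (a : ℂ) → z ≠ -(Complex.I * (a : ℂ)) →
      (1 / (2 * Complex.I * (a : ℂ))) *
          (f (Complex.I * (a : ℂ)) / (z - Complex.I * (a : ℂ))
            - f (-(Complex.I * (a : ℂ))) / (z + Complex.I * (a : ℂ)))
        - f z / (z ^ 2 + (a : ℂ) ^ 2)
      = (1 / (Real.pi : ℂ)) * ∫ s, (1 / (z + (s : ℂ))) * ((a ^ 2 + s ^ 2 : ℝ) : ℂ)⁻¹ ∂m₀ := by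
  intro z hz hz1 hz2
  have ha0 : (a:ℂ) ≠ 0 := by exact_mod_cast ha.ne'
  have hwcond : (Complex.I * (a:ℂ)).im ≠ 0 ∨ 0 < (Complex.I * (a:ℂ)).re := by
    left; simp [Complex.mul_im, ha.ne']
  have hwcond' : (-(Complex.I * (a:ℂ))).im ≠ 0 ∨ 0 < (-(Complex.I * (a:ℂ))).re := by
    left; simp [Complex.mul_im, ha.ne']
  have hfa := hrep (Complex.I * a) hwcond
  have hfb := hrep (-(Complex.I * a)) hwcond'
  have hfz := hrep z hz
  have hzm : z - Complex.I * a ≠ 0 := sub_ne_zero.mpr hz1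
  have hzp : z + Complex.I * a ≠ 0 := fun h => hz2 (eq_neg_of_add_eq_zero_left h)
  have hfact : z ^ 2 + (a:ℂ) ^ 2 = (z - Complex.I * a) * (z + Complex.I * a) := by
    ring_nf
    rw [Complex.I_sq]
    ring
  have h2ia : 2 * Complex.I * (a:ℂ) ≠ 0 :=
    mul_ne_zero (mul_ne_zero two_ne_zero Complex.I_ne_zero) ha0
  have hpi : (Real.pi : ℂ) ≠ 0 := by exact_mod_cast Real.pi_ne_zero
  have hi1 := integrable_kernel m₀ hsupp hint (Complex.I * a) hwcond
  have hi2 := integrable_kernel m₀ hsupp hint (-(Complex.I * a)) hwcond'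
  have hi3 := integrable_kernel m₀ hsupp hint z hz
  have key :
      (1 / (2 * Complex.I * a * (z - Complex.I * a))) *
          ∫ s, ((Complex.I * a) / (Complex.I * a + (s:ℂ))) * (s:ℂ)⁻¹ ∂m₀
        - (1 / (2 * Complex.I * a * (z + Complex.I * a))) *
          ∫ s, ((-(Complex.I * a)) / (-(Complex.I * a) + (s:ℂ))) * (s:ℂ)⁻¹ ∂m₀
        - (1 / ((z - Complex.I * a) * (z + Complex.I * a))) *
          ∫ s, (z / (z + (s:ℂ))) * (s:ℂ)⁻¹ ∂m₀
      = ∫ s, (1 / (z + (s:ℂ))) * ((a ^ 2 + s ^ 2 : ℝ) : ℂ)⁻¹ ∂m₀ := by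
    have e : ∫ s, ((1 / (2 * Complex.I * a * (z - Complex.I * a))) *
          (((Complex.I * a) / (Complex.I * a + (s:ℂ))) * (s:ℂ)⁻¹)
        - (1 / (2 * Complex.I * a * (z + Complex.I * a))) *
          (((-(Complex.I * a)) / (-(Complex.I * a) + (s:ℂ))) * (s:ℂ)⁻¹)
        - (1 / ((z - Complex.I * a) * (z + Complex.I * a))) *
          ((z / (z + (s:ℂ))) * (s:ℂ)⁻¹)) ∂m₀
        = (1 / (2 * Complex.I * a * (z - Complex.I * a))) *
          (∫ s, ((Complex.I * a) / (Complex.I * a + (s:ℂ))) * (s:ℂ)⁻¹ ∂m₀)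
        - (1 / (2 * Complex.I * a * (z + Complex.I * a))) *
          (∫ s, ((-(Complex.I * a)) / (-(Complex.I * a) + (s:ℂ))) * (s:ℂ)⁻¹ ∂m₀)
        - (1 / ((z - Complex.I * a) * (z + Complex.I * a))) *
          (∫ s, (z / (z + (s:ℂ))) * (s:ℂ)⁻¹ ∂m₀) := by
      have hs1 : Integrable (fun s : ℝ => (1 / (2 * Complex.I * a * (z - Complex.I * a))) *
          (((Complex.I * a) / (Complex.I * a + (s:ℂ))) * (s:ℂ)⁻¹)) m₀ := hi1.const_mul _
      have hs2 : Integrable (fun s : ℝ => (1 / (2 * Complex.I * a * (z + Complex.I * a))) *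
          (((-(Complex.I * a)) / (-(Complex.I * a) + (s:ℂ))) * (s:ℂ)⁻¹)) m₀ := hi2.const_mul _
      have hs3 : Integrable (fun s : ℝ => (1 / ((z - Complex.I * a) * (z + Complex.I * a))) *
          ((z / (z + (s:ℂ))) * (s:ℂ)⁻¹)) m₀ := hi3.const_mul _
      have hs12 : Integrable (fun s : ℝ => (1 / (2 * Complex.I * a * (z - Complex.I * a))) *
          (((Complex.I * a) / (Complex.I * a + (s:ℂ))) * (s:ℂ)⁻¹)
        - (1 / (2 * Complex.I * a * (z + Complex.I * a))) *
          (((-(Complex.I * a)) / (-(Complex.I * a) + (s:ℂ))) * (s:ℂ)⁻¹)) m₀ := hs1.sub hs2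
      rw [integral_sub hs12 hs3, integral_sub hs1 hs2,
        integral_const_mul, integral_const_mul, integral_const_mul]
    rw [← e]
    refine integral_congr_ae ?_
    filter_upwards [hsupp] with s hs
    exact pf_identity z a s ha hs (aux_add_ne z hz s hs.le) hzm hzp
  rw [hfa, hfb, hfz, hfact, ← key]
  have hIa : Complex.I * (a:ℂ) ≠ 0 := mul_ne_zero Complex.I_ne_zero ha0
  have := final_alg (Complex.I * (a:ℂ)) z (1 / (Real.pi : ℂ)) (c₁:ℂ) (c₂:ℂ)
    (∫ s, ((Complex.I * a) / (Complex.I * a + (s:ℂ))) * (s:ℂ)⁻¹ ∂m₀)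
    (∫ s, ((-(Complex.I * a)) / (-(Complex.I * a) + (s:ℂ))) * (s:ℂ)⁻¹ ∂m₀)
    (∫ s, (z / (z + (s:ℂ))) * (s:ℂ)⁻¹ ∂m₀) hIa hzm hzp
  simp only [mul_assoc] at this ⊢
  convert this using 2
end

section
/- For ψ(ξ) = ξ^{α/2} with α ∈ (0,2), the phase shift ϑ_λ = (1/π)∫₀¹ (1/(1−z²)) log[ψ_λ(λ²/z²)/ψ_λ(λ²z²)] dz equals (2−α)π/8 for every λ > 0, where ψ_λ(ξ) = (1−ξ/λ²)/(1−ψ(ξ)/ψ(λ²)). -/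
open MeasureTheory Set

open Real

theorem ratio_alg (w a : ℝ) (hw : w ≠ 0) (ha : a ≠ 0) (h1 : 1 - w ≠ 0) (h2 : 1 - a ≠ 0) :
    ((1 - 1/w)/(1 - 1/a)) / ((1 - w)/(1 - a)) = a/w := by
  have h2' : a ≠ 1 := fun h => h2 (by rw [h]; ring)
  have e1 : 1 - 1/w = -(1-w)/w := by field_simp; ring
  have e2 : 1 - 1/a = -(1-a)/a := by field_simp; ring
  rw [e1, e2, div_div_div_eq, div_eq_div_iff (by simp [hw, h1, ha, sub_ne_zero, h2'] : -(1 - a) / a * (1 - w) ≠ 0) hw]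
  field_simp

theorem key_ratio (α lam z : ℝ) (hα0 : 0 < α) (hlam : 0 < lam)
    (hz0 : 0 < z) (hz1 : z < 1) :
    ((1 - (lam ^ 2 / z ^ 2) / lam ^ 2) /
        (1 - Real.rpow (lam ^ 2 / z ^ 2) (α / 2) / Real.rpow (lam ^ 2) (α / 2))) /
     ((1 - (lam ^ 2 * z ^ 2) / lam ^ 2) /
        (1 - Real.rpow (lam ^ 2 * z ^ 2) (α / 2) / Real.rpow (lam ^ 2) (α / 2)))
    = z ^ (α - 2 : ℝ) := by
  have hL : (0:ℝ) < lam ^ 2 := by positivity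
  have hz2 : (0:ℝ) < z ^ 2 := by positivity
  have hsq : ((z ^ 2 : ℝ)) ^ (α/2 : ℝ) = z ^ (α : ℝ) := by
    rw [← Real.rpow_natCast z 2, ← Real.rpow_mul hz0.le]
    congr 1; push_cast; ring
  show ((1 - (lam ^ 2 / z ^ 2) / lam ^ 2) /
        (1 - (lam ^ 2 / z ^ 2) ^ (α / 2 : ℝ) / (lam ^ 2) ^ (α / 2 : ℝ))) /
     ((1 - (lam ^ 2 * z ^ 2) / lam ^ 2) /
        (1 - (lam ^ 2 * z ^ 2) ^ (α / 2 : ℝ) / (lam ^ 2) ^ (α / 2 : ℝ)))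
    = z ^ (α - 2 : ℝ)
  rw [Real.div_rpow hL.le hz2.le, Real.mul_rpow hL.le hz2.le, hsq]
  have hP : (0:ℝ) < (lam ^ 2) ^ (α / 2 : ℝ) := Real.rpow_pos_of_pos hL _
  have hzα : (0:ℝ) < z ^ (α:ℝ) := Real.rpow_pos_of_pos hz0 _
  have hzα1 : z ^ (α:ℝ) < 1 := Real.rpow_lt_one hz0.le hz1 hα0
  have hsub : z ^ (α - 2 : ℝ) = z ^ (α:ℝ) / z ^ 2 := by
    rw [Real.rpow_sub hz0, show (2:ℝ) = ((2:ℕ):ℝ) by norm_num, Real.rpow_natCast]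
  rw [hsub]
  generalize z ^ (α:ℝ) = a at *
  generalize (lam ^ 2) ^ (α/2:ℝ) = P at *
  have c1 : (lam ^ 2 / z ^ 2) / lam ^ 2 = 1 / z ^ 2 := by
    rw [div_div, mul_comm, div_mul_cancel_left₀ hL.ne', one_div]
  have c2 : (P / a) / P = 1 / a := by
    rw [div_div, mul_comm, div_mul_cancel_left₀ hP.ne', one_div]
  have c3 : (lam ^ 2 * z ^ 2) / lam ^ 2 = z ^ 2 := mul_div_cancel_left₀ _ hL.ne'
  have c4 : (P * a) / P = a := mul_div_cancel_left₀ _ hP.ne'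
  rw [c1, c2, c3, c4]
  exact ratio_alg _ _ hz2.ne' hzα.ne' (by nlinarith) (by nlinarith)


theorem odd_sum : HasSum (fun n : ℕ => (1:ℝ) / (2 * (n:ℝ) + 1) ^ 2) (π ^ 2 / 8) := by
  have h6 : HasSum (fun n : ℕ => (1:ℝ) / (n:ℝ) ^ 2) (π ^ 2 / 6) := hasSum_zeta_two
  have heven : HasSum (fun n : ℕ => (1:ℝ) / ((2 * n : ℕ):ℝ) ^ 2) (π ^ 2 / 24) := by
    have h := (h6.mul_left (1/4 : ℝ))
    have h24 : (π^2/24 : ℝ) = (1/4) * (π^2/6) := by ring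
    rw [h24]
    refine HasSum.congr_fun h fun n => ?_
    push_cast
    rw [mul_pow]
    norm_num
    ring
  have hodd_summable : Summable (fun n : ℕ => (1:ℝ) / (((2 * n + 1 : ℕ)):ℝ) ^ 2) := by
    have hinj : Function.Injective (fun n : ℕ => 2 * n + 1) := by
      intro a b h
      simpa using h
    exact h6.summable.comp_injective hinj
  obtain ⟨o, ho⟩ := hodd_summable
  have htot := HasSum.even_add_odd (f := fun n : ℕ => (1:ℝ)/(n:ℝ)^2) heven ho
  have huniq : π ^ 2 / 24 + o = π ^ 2 / 6 := htot.unique h6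
  have ho8 : o = π ^ 2 / 8 := by linarith
  rw [ho8] at ho
  have hfe : (fun n : ℕ => (1:ℝ) / (2 * (n:ℝ) + 1) ^ 2)
      = fun n : ℕ => (1:ℝ) / (((2 * n + 1 : ℕ)):ℝ) ^ 2 := by
    funext n; push_cast; ring
  rw [hfe]
  exact ho


theorem pow_log_cont (m : ℕ) (hm : m ≠ 0) :
    ContinuousOn (fun x : ℝ => x ^ m * Real.log x) (Icc 0 1) := by
  intro x hx
  rcases eq_or_ne x 0 with rfl | hx0
  · have hval : (fun x : ℝ => x ^ m * Real.log x) 0 = 0 := by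
      simp [zero_pow hm]
    rw [ContinuousWithinAt]
    rw [show ((0:ℝ) ^ m * Real.log 0) = 0 by simp [zero_pow hm]]
    have hmono : nhdsWithin (0:ℝ) (Icc 0 1) ≤ nhdsWithin 0 (Ici 0) :=
      nhdsWithin_mono _ Icc_subset_Ici_self
    refine Filter.Tendsto.mono_left ?_ hmono
    rw [show (Ici (0:ℝ)) = insert 0 (Ioi 0) by rw [Set.Ioi_insert], nhdsWithin_insert]
    rw [Filter.tendsto_sup]
    constructor
    · simpa [zero_pow hm] using tendsto_pure_nhds (fun x : ℝ => x ^ m * Real.log x) 0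
    · have h := tendsto_log_mul_rpow_nhdsGT_zero (r := (m:ℝ)) (by positivity)
      refine h.congr' ?_
      filter_upwards [self_mem_nhdsWithin] with y hy
      rw [Real.rpow_natCast, mul_comm]
  · exact ((continuous_pow m).continuousAt.mul
      (Real.continuousAt_log hx0)).continuousWithinAt

theorem pow_log_deriv (n : ℕ) (x : ℝ) (hx : x ∈ Ioo (0:ℝ) 1) :
    HasDerivAt (fun x : ℝ => x ^ (2*n+1) / ((2*(n:ℝ)+1)) ^ 2
        - x ^ (2*n+1) * Real.log x / (2*(n:ℝ)+1))
      (x ^ (2*n) * (-Real.log x)) x := by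
  have hx0 : x ≠ 0 := ne_of_gt hx.1
  have hm : (2*(n:ℝ)+1) ≠ 0 := by positivity
  have h1 := (hasDerivAt_pow (2*n+1) x).div_const ((2*(n:ℝ)+1)^2)
  have h2 := ((hasDerivAt_pow (2*n+1) x).mul (Real.hasDerivAt_log hx0)).div_const (2*(n:ℝ)+1)
  have h := h1.sub h2
  refine h.congr_deriv ?_
  have hpow : x ^ (2*n+1) * x⁻¹ = x ^ (2*n) := by
    rw [pow_succ, mul_assoc, mul_inv_cancel₀ hx0, mul_one]
  simp only [Nat.add_sub_cancel]
  push_cast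
  field_simp
  ring

theorem pow_log_nonneg (n : ℕ) (x : ℝ) (hx : x ∈ Ioo (0:ℝ) 1) :
    0 ≤ x ^ (2*n) * (-Real.log x) :=
  mul_nonneg (pow_nonneg hx.1.le _) (neg_nonneg.2 (Real.log_nonpos hx.1.le hx.2.le))

theorem pow_log_integrableOn (n : ℕ) :
    IntegrableOn (fun x : ℝ => x ^ (2*n) * (-Real.log x)) (Ioc (0:ℝ) 1) volume := by
  refine intervalIntegral.integrableOn_deriv_of_nonneg ?_ (pow_log_deriv n) (pow_log_nonneg n)
  exact ContinuousOn.sub ((continuous_pow _).continuousOn.div_const _)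
    ((pow_log_cont (2*n+1) (by omega)).div_const _)

theorem pow_log_integral (n : ℕ) :
    ∫ x in Ioo (0:ℝ) 1, x ^ (2*n) * (-Real.log x) = 1 / (2*(n:ℝ)+1) ^ 2 := by
  have hcont : ContinuousOn (fun x : ℝ => x ^ (2*n+1) / ((2*(n:ℝ)+1)) ^ 2
      - x ^ (2*n+1) * Real.log x / (2*(n:ℝ)+1)) (Icc 0 1) :=
    ContinuousOn.sub ((continuous_pow _).continuousOn.div_const _)
      ((pow_log_cont (2*n+1) (by omega)).div_const _)
  have hint : IntervalIntegrable (fun x : ℝ => x ^ (2*n) * (-Real.log x)) volume 0 1 := by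
    rw [intervalIntegrable_iff_integrableOn_Ioc_of_le zero_le_one]
    exact pow_log_integrableOn n
  have h := intervalIntegral.integral_eq_sub_of_hasDerivAt_of_le zero_le_one
    hcont (pow_log_deriv n) hint
  rw [← MeasureTheory.integral_Ioc_eq_integral_Ioo, ← intervalIntegral.integral_of_le zero_le_one, h]
  simp [zero_pow (show 2*n+1 ≠ 0 by omega)]



theorem log_int : ∫ z in Ioo (0:ℝ) 1, (-Real.log z) / (1 - z ^ 2) = π ^ 2 / 8 := by
  set μ := volume.restrict (Ioo (0:ℝ) 1) with hμ
  set f : ℕ → ℝ → ℝ := fun n z => z ^ (2*n) * (-Real.log z) with hf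
  have hmeas : ∀ n, AEStronglyMeasurable (f n) μ :=
    fun n => ((measurable_id.pow_const _).mul Real.measurable_log.neg).aestronglyMeasurable
  have hInt : ∀ n, Integrable (f n) μ :=
    fun n => (pow_log_integrableOn n).mono_set Ioo_subset_Ioc_self
  have hae : ∀ n, 0 ≤ᵐ[μ] f n := fun n =>
    (ae_restrict_iff' measurableSet_Ioo).2 (Filter.Eventually.of_forall (pow_log_nonneg n))
  have hsummable : Summable (fun n : ℕ => (1:ℝ) / (2 * (n:ℝ) + 1) ^ 2) := odd_sum.summable
  have hlin : ∀ n, ∫⁻ z, ‖f n z‖₊ ∂μ = ENNReal.ofReal (1 / (2*(n:ℝ)+1) ^ 2) := by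
    intro n
    have h1 : ∫⁻ z, ‖f n z‖₊ ∂μ = ∫⁻ z, ENNReal.ofReal (f n z) ∂μ := by
      refine lintegral_congr_ae ((hae n).mono fun z hz => ?_)
      have hz' : 0 ≤ f n z := hz
      exact Real.enorm_eq_ofReal hz'
    rw [h1, ← ofReal_integral_eq_lintegral_ofReal (hInt n) (hae n)]
    congr 1
    exact pow_log_integral n
  have hfin : ∑' n, ∫⁻ z, ‖f n z‖₊ ∂μ ≠ ⊤ := by
    rw [tsum_congr hlin, ← ENNReal.ofReal_tsum_of_nonneg (fun n => by positivity) hsummable]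
    exact ENNReal.ofReal_ne_top
  have hcongr : ∀ z ∈ Ioo (0:ℝ) 1, (-Real.log z) / (1 - z ^ 2) = ∑' n, f n z := by
    intro z hz
    have hz2 : z ^ 2 < 1 := by nlinarith [hz.1, hz.2]
    have hg : HasSum (fun n : ℕ => (z ^ 2) ^ n * (-Real.log z)) ((1 - z^2)⁻¹ * (-Real.log z)) :=
      (hasSum_geometric_of_lt_one (by positivity) hz2).mul_right _
    have : HasSum (fun n => f n z) ((1 - z^2)⁻¹ * (-Real.log z)) := by
      refine hg.congr_fun fun n => ?_
      rw [hf]; simp only [← pow_mul]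
    rw [this.tsum_eq, inv_mul_eq_div]
  calc ∫ z in Ioo (0:ℝ) 1, (-Real.log z) / (1 - z ^ 2)
      = ∫ z, (∑' n, f n z) ∂μ := by
        refine setIntegral_congr_fun measurableSet_Ioo fun z hz => hcongr z hz
    _ = ∑' n, ∫ z, f n z ∂μ := integral_tsum hmeas hfin
    _ = ∑' n : ℕ, (1:ℝ) / (2 * (n:ℝ) + 1) ^ 2 := tsum_congr fun n => pow_log_integral n
    _ = π ^ 2 / 8 := odd_sum.tsum_eq

/-- For `ψ(ξ) = ξ^(α/2)` with `α ∈ (0,2)` and `λ > 0`, the phase shift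
`ϑ_λ = (1/π)∫₀¹ (1/(1-z²)) log[ψ_λ(λ²/z²)/ψ_λ(λ²z²)] dz` equals `(2-α)π/8`,
where `ψ_λ(ξ) = (1 - ξ/λ²)/(1 - ψ(ξ)/ψ(λ²))`. -/
theorem stable_phase_shift (α lam : ℝ) (hα : α ∈ Set.Ioo (0 : ℝ) 2) (hlam : 0 < lam) :
    (1 / Real.pi) * ∫ z in Set.Ioo (0 : ℝ) 1,
      (1 / (1 - z ^ 2)) * Real.log
        (((1 - (lam ^ 2 / z ^ 2) / lam ^ 2) /
            (1 - Real.rpow (lam ^ 2 / z ^ 2) (α / 2) / Real.rpow (lam ^ 2) (α / 2))) /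
         ((1 - (lam ^ 2 * z ^ 2) / lam ^ 2) /
            (1 - Real.rpow (lam ^ 2 * z ^ 2) (α / 2) / Real.rpow (lam ^ 2) (α / 2))))
      = (2 - α) * Real.pi / 8 := by
  obtain ⟨hα0, hα2⟩ := hα
  have hcongr : ∀ z ∈ Set.Ioo (0:ℝ) 1,
      (1 / (1 - z ^ 2)) * Real.log
        (((1 - (lam ^ 2 / z ^ 2) / lam ^ 2) /
            (1 - Real.rpow (lam ^ 2 / z ^ 2) (α / 2) / Real.rpow (lam ^ 2) (α / 2))) /
         ((1 - (lam ^ 2 * z ^ 2) / lam ^ 2) /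
            (1 - Real.rpow (lam ^ 2 * z ^ 2) (α / 2) / Real.rpow (lam ^ 2) (α / 2))))
      = (2 - α) * ((-Real.log z) / (1 - z ^ 2)) := by
    intro z hz
    rw [key_ratio α lam z hα0 hlam hz.1 hz.2, Real.log_rpow hz.1]
    ring
  rw [MeasureTheory.setIntegral_congr_fun measurableSet_Ioo hcongr,
    MeasureTheory.integral_const_mul, log_int]
  have hπ : Real.pi ≠ 0 := Real.pi_ne_zero
  field_simp
end

section
/- Let ψ_λ be differentiable and positive on (0,∞). Then the phase shift ϑ_λ = (1/π)∫₀¹ (1/(1−z²)) log[ψ_λ(λ²/z²)/ψ_λ(λ²z²)] dz satisfies ϑ_λ ≤ (π/2)·sup_{ξ>0} ξψ_λ'(ξ)/ψ_λ(ξ), provided the supremum is finite. -/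
open MeasureTheory Set

lemma aux_neg_log_le (z : ℝ) (h0 : 0 < z) : -Real.log z ≤ 2 * z ^ (-(1/2) : ℝ) := by
  have h1 := Real.log_le_sub_one_of_pos (Real.rpow_pos_of_pos h0 (-(1/2)))
  rw [Real.log_rpow h0] at h1
  nlinarith [Real.rpow_pos_of_pos h0 (-(1/2) : ℝ)]

lemma aux_rpow_int : IntegrableOn (fun z : ℝ => 1 + 2 * z ^ (-(1/2) : ℝ)) (Ioc 0 1) := by
  have h : IntervalIntegrable (fun z : ℝ => 1 + 2 * z ^ (-(1/2) : ℝ)) volume 0 1 := by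
    apply IntervalIntegrable.add intervalIntegrable_const
    exact (intervalIntegral.intervalIntegrable_rpow' (by norm_num)).const_mul 2
  exact (intervalIntegrable_iff_integrableOn_Ioc_of_le zero_le_one).mp h

lemma aux_fn_int (n : ℕ) :
    IntegrableOn (fun z : ℝ => (-Real.log z) * z ^ (2 * n)) (Ioc 0 1) := by
  apply Integrable.mono' aux_rpow_int
  · apply Measurable.aestronglyMeasurable
    exact (Real.measurable_log.neg).mul (measurable_id.pow_const _)
  · filter_upwards [ae_restrict_mem measurableSet_Ioc] with z hz
    have h0 : 0 < z := hz.1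
    have h1 : z ≤ 1 := hz.2
    have hl : 0 ≤ -Real.log z := by
      simp only [Left.nonneg_neg_iff]
      exact Real.log_nonpos h0.le h1
    have hp : z ^ (2 * n) ≤ 1 := pow_le_one₀ h0.le h1
    have : ‖(-Real.log z) * z ^ (2 * n)‖ = (-Real.log z) * z ^ (2 * n) := by
      rw [Real.norm_eq_abs, abs_of_nonneg (mul_nonneg hl (pow_nonneg h0.le _))]
    rw [this]
    have := aux_neg_log_le z h0
    nlinarith [pow_nonneg h0.le (2*n), mul_le_of_le_one_right hl hp]

lemma aux_Jn (n : ℕ) :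
    ∫ z in (0:ℝ)..1, (-Real.log z) * z ^ (2 * n) = 1 / (2 * (n:ℝ) + 1) ^ 2 := by
  have hint : IntervalIntegrable (fun z : ℝ => (-Real.log z) * z ^ (2 * n)) volume 0 1 :=
    (intervalIntegrable_iff_integrableOn_Ioc_of_le zero_le_one).mpr (aux_fn_int n)
  set c : ℕ := 2 * n + 1 with hc
  have hcR : ((c:ℝ)) = 2 * (n:ℝ) + 1 := by push_cast [hc]; ring
  have hcpos : (0:ℝ) < c := by positivity
  set G : ℝ → ℝ := fun z => (z * Real.log z * z ^ (2*n)) * (-(1/(c:ℝ))) + z ^ c * (1/(c:ℝ)^2)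
    with hG
  have hGcont : ContinuousOn G (Icc 0 1) := by
    apply Continuous.continuousOn
    exact ((Real.continuous_mul_log.mul (continuous_pow _)).mul continuous_const).add
      ((continuous_pow c).mul continuous_const)
  have hGderiv : ∀ z ∈ Ioo (0:ℝ) 1, HasDerivWithinAt G ((-Real.log z) * z ^ (2*n)) (Ioi z) z := by
    intro z hz
    have hz0 : z ≠ 0 := ne_of_gt hz.1
    have hG' : G = fun z => z ^ c * Real.log z * (-(1/(c:ℝ))) + z ^ c * (1/(c:ℝ)^2) := by
      funext x
      simp only [hG, hc, pow_succ]
      ring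
    rw [hG']
    have h1 : HasDerivAt (fun z : ℝ => z ^ c * Real.log z)
        ((c:ℝ) * z ^ (c-1) * Real.log z + z ^ c * z⁻¹) z :=
      (hasDerivAt_pow c z).mul (Real.hasDerivAt_log hz0)
    have h2 : HasDerivAt (fun z : ℝ => z ^ c * Real.log z * (-(1/(c:ℝ))) + z ^ c * (1/(c:ℝ)^2))
        (((c:ℝ) * z ^ (c-1) * Real.log z + z ^ c * z⁻¹) * (-(1/(c:ℝ)))
          + (c:ℝ) * z ^ (c-1) * (1/(c:ℝ)^2)) z :=
      (h1.mul_const _).add ((hasDerivAt_pow c z).mul_const _)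
    have he : ((c:ℝ) * z ^ (c-1) * Real.log z + z ^ c * z⁻¹) * (-(1/(c:ℝ)))
          + (c:ℝ) * z ^ (c-1) * (1/(c:ℝ)^2) = (-Real.log z) * z ^ (2*n) := by
      have h3 : c - 1 = 2 * n := by omega
      have h4 : z ^ c * z⁻¹ = z ^ (2*n) := by
        rw [hc, pow_succ, mul_assoc, mul_inv_cancel₀ hz0, mul_one]
      rw [h3, h4]
      field_simp
      ring
    rw [← he]
    exact h2.hasDerivWithinAt
  have := intervalIntegral.integral_eq_sub_of_hasDeriv_right_of_le zero_le_one hGcont hGderiv hint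
  rw [this]
  simp only [hG]
  norm_num [hcR]
  left; omega

set_option maxHeartbeats 1000000 in
lemma aux_hasSum_odd : HasSum (fun n : ℕ => 1 / (2 * (n:ℝ) + 1) ^ 2) (Real.pi ^ 2 / 8) := by
  have htot := hasSum_zeta_two
  have heven : HasSum (fun k : ℕ => (1:ℝ) / ((2 * k : ℕ) : ℝ) ^ 2) (Real.pi ^ 2 / 24) := by
    have h := htot.mul_left (1/4)
    have he : (fun k : ℕ => (1:ℝ) / ((2 * k : ℕ) : ℝ) ^ 2)
        = fun k : ℕ => 1 / 4 * (1 / (k:ℝ) ^ 2) := by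
      funext k
      rcases Nat.eq_zero_or_pos k with hk | hk
      · subst hk; norm_num
      · have hk' : ((k:ℝ)) ≠ 0 := Nat.cast_ne_zero.mpr hk.ne'
        push_cast
        field_simp
        ring
    rw [he]
    rw [show Real.pi ^ 2 / 24 = 1 / 4 * (Real.pi ^ 2 / 6) by ring]
    exact h
  have hinj : Function.Injective (fun k : ℕ => 2 * k + 1) := by
    intro a b hab
    simpa using hab
  have hodd : Summable (fun k : ℕ => (1:ℝ) / ((2 * k + 1 : ℕ) : ℝ) ^ 2) :=
    htot.summable.comp_injective hinj
  obtain ⟨x, hx⟩ := hodd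
  have hsum := HasSum.even_add_odd (f := fun n : ℕ => (1:ℝ)/(n:ℝ)^2) heven hx
  have hxe : Real.pi ^ 2 / 24 + x = Real.pi ^ 2 / 6 := hsum.unique htot
  have hx8 : x = Real.pi ^ 2 / 8 := by linarith
  rw [hx8] at hx
  have he2 : (fun n : ℕ => 1 / (2 * (n:ℝ) + 1) ^ 2)
      = fun k : ℕ => (1:ℝ) / ((2 * k + 1 : ℕ) : ℝ) ^ 2 := by
    funext n; push_cast; ring_nf
  rw [he2]
  exact hx

lemma aux_log_ratio (ψl : ℝ → ℝ)
    (hpos : ∀ ξ : ℝ, 0 < ξ → 0 < ψl ξ)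
    (hdiff : ∀ ξ : ℝ, 0 < ξ → DifferentiableAt ℝ ψl ξ)
    (M : ℝ) (hM : ∀ ξ : ℝ, 0 < ξ → ξ * deriv ψl ξ / ψl ξ ≤ M)
    (a b : ℝ) (ha : 0 < a) (hab : a ≤ b) :
    Real.log (ψl b / ψl a) ≤ M * (Real.log b - Real.log a) := by
  have hb : 0 < b := lt_of_lt_of_le ha hab
  set H : ℝ → ℝ := fun ξ => M * Real.log ξ - Real.log (ψl ξ) with hH
  have hHd : ∀ x : ℝ, 0 < x → HasDerivAt H (M * x⁻¹ - deriv ψl x / ψl x) x := by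
    intro x hx
    have h1 : HasDerivAt (fun ξ : ℝ => M * Real.log ξ) (M * x⁻¹) x :=
      (Real.hasDerivAt_log hx.ne').const_mul M
    have h2 : HasDerivAt (fun ξ : ℝ => Real.log (ψl ξ)) (deriv ψl x / ψl x) x := by
      have h3 := (Real.hasDerivAt_log (hpos x hx).ne').comp x ((hdiff x hx).hasDerivAt)
      rw [div_eq_inv_mul]
      exact h3
    exact h1.sub h2
  have hsub : Icc a b ⊆ Ioi (0:ℝ) := fun x hx => lt_of_lt_of_le ha hx.1
  have hdiffH : ∀ x ∈ Icc a b, DifferentiableAt ℝ H x :=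
    fun x hx => (hHd x (hsub hx)).differentiableAt
  have hmonoH : MonotoneOn H (Icc a b) := by
    apply monotoneOn_of_deriv_nonneg (convex_Icc a b)
    · exact fun x hx => (hdiffH x hx).continuousAt.continuousWithinAt
    · intro x hx
      rw [interior_Icc] at hx
      exact (hdiffH x (Ioo_subset_Icc_self hx)).differentiableWithinAt
    · intro x hx
      rw [interior_Icc] at hx
      have hx0 : 0 < x := hsub (Ioo_subset_Icc_self hx)
      rw [(hHd x hx0).deriv, sub_nonneg]
      have h4 := hM x hx0
      have h5 : 0 < ψl x := hpos x hx0
      rw [div_le_iff₀ h5] at h4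
      rw [div_le_iff₀ h5]
      have h6 := mul_le_mul_of_nonneg_left h4 (inv_nonneg.mpr hx0.le)
      have h7 : x⁻¹ * (x * deriv ψl x) = deriv ψl x := by field_simp
      nlinarith [h6, h7]
  have hHab : H a ≤ H b := hmonoH (left_mem_Icc.mpr hab) (right_mem_Icc.mpr hab) hab
  have hlog : Real.log (ψl b / ψl a) = Real.log (ψl b) - Real.log (ψl a) :=
    Real.log_div (hpos b hb).ne' (hpos a ha).ne'
  rw [hlog]
  simp only [hH] at hHab
  linarith

lemma aux_Jn_Ioo (n : ℕ) :
    ∫ z in Ioo (0:ℝ) 1, (-Real.log z) * z ^ (2 * n) = 1 / (2 * (n:ℝ) + 1) ^ 2 := by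
  rw [← MeasureTheory.integral_Ioc_eq_integral_Ioo, ← intervalIntegral.integral_of_le zero_le_one]
  exact aux_Jn n

lemma aux_fn_int_Ioo (n : ℕ) :
    IntegrableOn (fun z : ℝ => (-Real.log z) * z ^ (2 * n)) (Ioo 0 1) :=
  (aux_fn_int n).mono_set Ioo_subset_Ioc_self

lemma aux_main_integral :
    ∫ z in Ioo (0:ℝ) 1, (-Real.log z) * (1 - z ^ 2)⁻¹ = Real.pi ^ 2 / 8 := by
  have hmeas : ∀ n : ℕ, AEStronglyMeasurable (fun z : ℝ => (-Real.log z) * z ^ (2 * n))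
      (volume.restrict (Ioo 0 1)) := fun n =>
    ((Real.measurable_log.neg).mul (measurable_id.pow_const _)).aestronglyMeasurable
  have hnorm : ∀ n : ℕ, ∫⁻ z in Ioo (0:ℝ) 1, ‖(-Real.log z) * z ^ (2 * n)‖₊
      = ENNReal.ofReal (1 / (2 * (n:ℝ) + 1) ^ 2) := by
    intro n
    simp_rw [← enorm_eq_nnnorm]
    rw [← MeasureTheory.ofReal_integral_norm_eq_lintegral_enorm (aux_fn_int_Ioo n)]
    congr 1
    rw [← aux_Jn_Ioo n]
    apply setIntegral_congr_fun measurableSet_Ioo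
    intro z hz
    have hl : 0 ≤ -Real.log z := by
      simp only [Left.nonneg_neg_iff]
      exact Real.log_nonpos hz.1.le hz.2.le
    simp only [Real.norm_eq_abs]
    rw [abs_of_nonneg (mul_nonneg hl (pow_nonneg hz.1.le _))]
  have hsum_fin : ∑' n : ℕ, ∫⁻ z in Ioo (0:ℝ) 1, ‖(-Real.log z) * z ^ (2 * n)‖₊ ≠ ⊤ := by
    simp_rw [hnorm]
    rw [← ENNReal.ofReal_tsum_of_nonneg (fun n => by positivity) aux_hasSum_odd.summable]
    exact ENNReal.ofReal_ne_top
  have hexch := MeasureTheory.integral_tsum hmeas hsum_fin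
  have hpt : ∀ z ∈ Ioo (0:ℝ) 1,
      (-Real.log z) * (1 - z ^ 2)⁻¹ = ∑' n : ℕ, (-Real.log z) * z ^ (2 * n) := by
    intro z hz
    have hz2 : z ^ 2 < 1 := by nlinarith [hz.1, hz.2]
    have hz2' : 0 ≤ z ^ 2 := sq_nonneg z
    have hgeo : ∑' n : ℕ, (z ^ 2) ^ n = (1 - z ^ 2)⁻¹ := tsum_geometric_of_lt_one hz2' hz2
    calc (-Real.log z) * (1 - z ^ 2)⁻¹ = (-Real.log z) * ∑' n : ℕ, (z ^ 2) ^ n := by rw [hgeo]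
    _ = ∑' n : ℕ, (-Real.log z) * (z ^ 2) ^ n := by rw [tsum_mul_left]
    _ = ∑' n : ℕ, (-Real.log z) * z ^ (2 * n) := by
        congr 1; funext n; rw [← pow_mul]
  rw [setIntegral_congr_fun measurableSet_Ioo hpt, hexch]
  simp_rw [aux_Jn_Ioo]
  exact aux_hasSum_odd.tsum_eq

lemma aux_F_bound (z : ℝ) (h0 : 0 < z) (h1 : z < 1) :
    (-Real.log z) * (1 - z ^ 2)⁻¹ ≤ 1 + 2 * z ^ (-(1/2) : ℝ) := by
  have hz2 : 0 < 1 - z ^ 2 := by nlinarith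
  have hl : 0 ≤ -Real.log z := by
    simp only [Left.nonneg_neg_iff]; exact Real.log_nonpos h0.le h1.le
  -- 1 - log z ≤ z⁻¹, hence z * (1 - log z) ≤ 1
  have hexp := Real.add_one_le_exp (-Real.log z)
  rw [Real.exp_neg, Real.exp_log h0] at hexp
  have hkey : z * (1 - Real.log z) ≤ 1 := by
    have := mul_le_mul_of_nonneg_left hexp h0.le
    rw [mul_inv_cancel₀ h0.ne'] at this
    nlinarith
  have step1 : (-Real.log z) * (1 - z ^ 2)⁻¹ ≤ 1 + (-Real.log z) := by
    rw [← div_eq_mul_inv, div_le_iff₀ hz2]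
    nlinarith [mul_le_mul_of_nonneg_left hkey h0.le]
  have step2 := aux_neg_log_le z h0
  linarith
lemma aux_F_int : IntegrableOn (fun z : ℝ => (-Real.log z) * (1 - z ^ 2)⁻¹) (Ioo 0 1) := by
  apply Integrable.mono' (aux_rpow_int.mono_set Ioo_subset_Ioc_self)
  · apply Measurable.aestronglyMeasurable
    exact (Real.measurable_log.neg).mul
      ((measurable_const.sub (measurable_id.pow_const 2)).inv)
  · filter_upwards [ae_restrict_mem measurableSet_Ioo] with z hz
    have hz2 : 0 < 1 - z ^ 2 := by nlinarith [hz.1, hz.2]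
    have hl : 0 ≤ -Real.log z := by
      simp only [Left.nonneg_neg_iff]; exact Real.log_nonpos hz.1.le hz.2.le
    rw [Real.norm_eq_abs, abs_of_nonneg (mul_nonneg hl (inv_nonneg.mpr hz2.le))]
    exact aux_F_bound z hz.1 hz.2

/-- Let `ψ_λ` be differentiable, positive and non-decreasing on `(0,∞)`. If
`ξ ψ_λ'(ξ)/ψ_λ(ξ) ≤ M` for all `ξ > 0`, then the phase shift
`ϑ_λ = (1/π)∫₀¹ (1/(1-z²)) log[ψ_λ(λ²/z²)/ψ_λ(λ²z²)] dz` satisfies `ϑ_λ ≤ (π/2) M`. -/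
theorem phase_shift_bound (ψl : ℝ → ℝ) (lam : ℝ) (hlam : 0 < lam)
    (hpos : ∀ ξ : ℝ, 0 < ξ → 0 < ψl ξ)
    (hdiff : ∀ ξ : ℝ, 0 < ξ → DifferentiableAt ℝ ψl ξ)
    (hmono : ∀ ξ : ℝ, 0 < ξ → 0 ≤ deriv ψl ξ)
    (M : ℝ) (hM : ∀ ξ : ℝ, 0 < ξ → ξ * deriv ψl ξ / ψl ξ ≤ M) :
    (1 / Real.pi) * ∫ z in Set.Ioo (0 : ℝ) 1,
      (1 / (1 - z ^ 2)) * Real.log (ψl (lam ^ 2 / z ^ 2) / ψl (lam ^ 2 * z ^ 2))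
      ≤ Real.pi / 2 * M := by
  -- ψl is monotone on (0,∞)
  have hpsi_mono : ∀ a b : ℝ, 0 < a → a ≤ b → ψl a ≤ ψl b := by
    intro a b ha hab
    have : MonotoneOn ψl (Icc a b) := by
      apply monotoneOn_of_deriv_nonneg (convex_Icc a b)
      · exact fun x hx => (hdiff x (lt_of_lt_of_le ha hx.1)).continuousAt.continuousWithinAt
      · intro x hx
        rw [interior_Icc] at hx
        exact (hdiff x (lt_of_lt_of_le ha hx.1.le)).differentiableWithinAt
      · intro x hx
        rw [interior_Icc] at hx
        exact hmono x (lt_of_lt_of_le ha hx.1.le)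
    exact this (left_mem_Icc.mpr hab) (right_mem_Icc.mpr hab) hab
  set g : ℝ → ℝ := fun z =>
    (1 / (1 - z ^ 2)) * Real.log (ψl (lam ^ 2 / z ^ 2) / ψl (lam ^ 2 * z ^ 2)) with hg
  set h : ℝ → ℝ := fun z => (4 * M) * ((-Real.log z) * (1 - z ^ 2)⁻¹) with hh
  have hbounds : ∀ z ∈ Ioo (0:ℝ) 1, 0 ≤ g z ∧ g z ≤ h z := by
    intro z hz
    have hz0 : 0 < z := hz.1
    have hz1 : z < 1 := hz.2
    have hz2 : 0 < 1 - z ^ 2 := by nlinarith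
    have ha : 0 < lam ^ 2 * z ^ 2 := by positivity
    have hb : 0 < lam ^ 2 / z ^ 2 := by positivity
    have hab : lam ^ 2 * z ^ 2 ≤ lam ^ 2 / z ^ 2 := by
      rw [le_div_iff₀ (by positivity : (0:ℝ) < z ^ 2)]
      have hz21 : z ^ 2 ≤ 1 := by nlinarith
      nlinarith [sq_nonneg lam, sq_nonneg z]
    constructor
    · apply mul_nonneg (by positivity)
      apply Real.log_nonneg
      rw [le_div_iff₀ (hpos _ ha)]
      rw [one_mul]
      exact hpsi_mono _ _ ha hab
    · have hlr := aux_log_ratio ψl hpos hdiff M hM _ _ ha hab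
      have hlog : Real.log (lam ^ 2 / z ^ 2) - Real.log (lam ^ 2 * z ^ 2)
          = -4 * Real.log z := by
        have e1 : Real.log (lam ^ 2 / z ^ 2) = Real.log (lam ^ 2) - Real.log (z ^ 2) :=
          Real.log_div (by positivity) (by positivity)
        have e2 : Real.log (lam ^ 2 * z ^ 2) = Real.log (lam ^ 2) + Real.log (z ^ 2) :=
          Real.log_mul (by positivity) (by positivity)
        have e3 : Real.log (z ^ 2) = 2 * Real.log z := by
          rw [Real.log_pow]; push_cast; ring
        rw [e1, e2, e3]; ring
      rw [hlog] at hlr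
      simp only [hg, hh]
      calc (1 / (1 - z ^ 2)) * Real.log (ψl (lam ^ 2 / z ^ 2) / ψl (lam ^ 2 * z ^ 2))
          ≤ (1 / (1 - z ^ 2)) * (M * (-4 * Real.log z)) := by
            apply mul_le_mul_of_nonneg_left hlr (by positivity)
        _ = (4 * M) * ((-Real.log z) * (1 - z ^ 2)⁻¹) := by
            rw [one_div]; ring
  have hh_int : IntegrableOn h (Ioo 0 1) := aux_F_int.const_mul (4 * M)
  have hmono_int : ∫ z in Ioo (0:ℝ) 1, g z ≤ ∫ z in Ioo (0:ℝ) 1, h z := by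
    apply integral_mono_of_nonneg
    · filter_upwards [ae_restrict_mem measurableSet_Ioo] with z hz
      exact (hbounds z hz).1
    · exact hh_int
    · filter_upwards [ae_restrict_mem measurableSet_Ioo] with z hz
      exact (hbounds z hz).2
  have hh_val : ∫ z in Ioo (0:ℝ) 1, h z = M * Real.pi ^ 2 / 2 := by
    simp only [hh]
    rw [MeasureTheory.integral_const_mul, aux_main_integral]
    ring
  have hpi : (0:ℝ) < Real.pi := Real.pi_pos
  have hfinal : (1 / Real.pi) * ∫ z in Ioo (0:ℝ) 1, g z
      ≤ (1 / Real.pi) * (M * Real.pi ^ 2 / 2) := by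
    apply mul_le_mul_of_nonneg_left _ (by positivity)
    rw [← hh_val]
    exact hmono_int
  calc (1 / Real.pi) * ∫ z in Set.Ioo (0 : ℝ) 1,
      (1 / (1 - z ^ 2)) * Real.log (ψl (lam ^ 2 / z ^ 2) / ψl (lam ^ 2 * z ^ 2))
      ≤ (1 / Real.pi) * (M * Real.pi ^ 2 / 2) := hfinal
    _ = Real.pi / 2 * M := by
        field_simp
end
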